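/- For odd n ≥ 5 and m = ⌊(n+1)/4⌋, the subgraph of the circulant graph G_n obtained by deleting the two vertices v_0 and v_m is not switching separable. -/

import Mathlib

/-- The `U`-switching of a graph: toggle exactly the edges between `U` and its complement. -/
def SimpleGraph.switch {V : Type*} (G : SimpleGraph V) (U : Set V) : SimpleGraph V where
  Adj a b := a ≠ b ∧ (G.Adj a b ↔ ((a ∈ U) ↔ (b ∈ U)))
  symm := ⟨fun a b => by
    rintro ⟨h, h2⟩
    refine ⟨h.symm, ?_⟩
    rw [G.adj_comm]; tauto⟩
  loopless := ⟨fun a => by simp⟩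

/-- The complete bipartite graph with parts `U` and `Uᶜ` on vertex set `V`. -/
def completeBipartite {V : Type*} (U : Set V) : SimpleGraph V where
  Adj a b := (a ∈ U ∧ b ∉ U) ∨ (b ∈ U ∧ a ∉ U)
  symm := ⟨fun a b => by tauto⟩
  loopless := ⟨fun a => by tauto⟩

/-- `W` is isolable in `G` if `2 ≤ |W|`, `2 ≤ |Wᶜ|`, and some switching of `G`
has no edges between `W` and `Wᶜ`. -/
def SimpleGraph.Isolable {V : Type*} (G : SimpleGraph V) (W : Set V) : Prop :=
  2 ≤ W.ncard ∧ 2 ≤ Wᶜ.ncard ∧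
    ∃ U : Set V, ∀ a ∈ W, ∀ b ∈ Wᶜ, ¬ (G.switch U).Adj a b

def SimpleGraph.SwitchingSeparable {V : Type*} (G : SimpleGraph V) : Prop :=
  ∃ W : Set V, G.Isolable W

/-- The number of edges of `G` among the pairs {a,c}, {a,d}, {b,c}, {b,d}. -/
noncomputable def SimpleGraph.N {V : Type*} (G : SimpleGraph V) (a b c d : V) : ℕ := by
  classical
  exact (if G.Adj a c then 1 else 0) + (if G.Adj a d then 1 else 0) +
    (if G.Adj b c then 1 else 0) + (if G.Adj b d then 1 else 0)

/-- The circulant graph on `ZMod n` with connection set `{±1, …, ±⌊n/4⌋}`. -/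
def circulant (n : ℕ) : SimpleGraph (ZMod n) :=
  SimpleGraph.fromRel (fun a b => ∃ j : ℕ, 1 ≤ j ∧ j ≤ n / 4 ∧ b = a + (j : ZMod n))

/-- Evaluation of a multilinear polynomial over GF(2), given by its coefficient function. -/
def mleval {k : ℕ} (c : Finset (Fin k) → ZMod 2) (x : Fin k → ZMod 2) : ZMod 2 :=
  ∑ s : Finset (Fin k), c s * ∏ i ∈ s, x i

/-- The multilinear polynomial `c` has degree at most `d`. -/
def mldegLE {k : ℕ} (c : Finset (Fin k) → ZMod 2) (d : ℕ) : Prop :=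
  ∀ s : Finset (Fin k), c s ≠ 0 → s.card ≤ d

/-- The graph of a quadratic polynomial: `i ~ j` iff the monomial `x i * x j` occurs. -/
def graphOf {k : ℕ} (c : Finset (Fin k) → ZMod 2) : SimpleGraph (Fin k) where
  Adj i j := i ≠ j ∧ c {i, j} ≠ 0
  symm := ⟨fun i j => by
    rintro ⟨h, h2⟩
    exact ⟨h.symm, by rwa [Finset.pair_comm]⟩⟩
  loopless := ⟨fun i => by simp⟩

/-- The polynomial `c` represents the extended Boolean function `f`
(i.e. they agree on all tuples with an even number of ones). -/
def Represents {k : ℕ} (c : Finset (Fin k) → ZMod 2) (f : (Fin k → ZMod 2) → ZMod 2) : Prop :=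
  ∀ x : Fin k → ZMod 2, (∑ i, x i) = 0 → mleval c x = f x

/-- An extended Boolean function in `k` arguments is separable if on its domain it is the
sum of two Boolean functions depending on disjoint argument sets of at most `k - 2` variables. -/
def EbfSeparable {k : ℕ} (f : (Fin k → ZMod 2) → ZMod 2) : Prop :=
  ∃ A B : Finset (Fin k), Disjoint A B ∧ A.card ≤ k - 2 ∧ B.card ≤ k - 2 ∧
    ∃ g h : (Fin k → ZMod 2) → ZMod 2,
      (∀ x y : Fin k → ZMod 2, (∀ i ∈ A, x i = y i) → g x = g y) ∧
      (∀ x y : Fin k → ZMod 2, (∀ i ∈ B, x i = y i) → h x = h y) ∧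
      ∀ x : Fin k → ZMod 2, (∑ i, x i) = 0 → f x = g x + h x


set_option linter.unusedSectionVars false

namespace CDT
variable {n : ℕ} [NeZero n]

lemma val_sub_sum (a b : ZMod n) (h : a ≠ b) : (b-a).val + (a-b).val = n := by
  have h1 : b - a ≠ 0 := by
    intro hc; rw [sub_eq_zero] at hc; exact h hc.symm
  have h2 : a - b ≠ 0 := by
    intro hc; rw [sub_eq_zero] at hc; exact h hc
  have v1 : (b-a).val ≠ 0 := fun hc => h1 ((ZMod.val_eq_zero _).mp hc)
  have v2 : (a-b).val ≠ 0 := fun hc => h2 ((ZMod.val_eq_zero _).mp hc)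
  have h0 : (b-a) + (a-b) = 0 := by ring
  have hadd := ZMod.val_add (b-a) (a-b)
  rw [h0] at hadd
  have hz : (0 : ZMod n).val = 0 := ZMod.val_zero
  rw [hz] at hadd
  have l1 := ZMod.val_lt (b-a)
  have l2 := ZMod.val_lt (a-b)
  rcases Nat.lt_or_ge ((b-a).val + (a-b).val) n with h' | h'
  · rw [Nat.mod_eq_of_lt h'] at hadd; omega
  · have : (b-a).val + (a-b).val - n < n := by omega
    have := Nat.mod_eq_sub_mod h' ▸ hadd
    rw [Nat.mod_eq_of_lt ‹(b-a).val + (a-b).val - n < n›] at this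
    omega

/-- value-based characterization of circulant adjacency -/
lemma adjv {t : ℕ} (ht : t = n / 4) (a b : ZMod n) :
    (circulant n).Adj a b ↔ ((b-a).val ≠ 0 ∧ ((b-a).val ≤ t ∨ n - (b-a).val ≤ t)) := by
  subst ht
  have hnpos : 0 < n := Nat.pos_of_ne_zero (NeZero.ne n)
  have htn : n / 4 < n := Nat.div_lt_self hnpos (by norm_num)
  constructor
  · rintro ⟨hne, h | h⟩ <;> obtain ⟨j, hj1, hj2, hj3⟩ := h
    · have hba : b - a = (j : ZMod n) := by rw [hj3]; ring
      have hv : (b-a).val = j := by rw [hba, ZMod.val_natCast_of_lt (by omega)]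
      exact ⟨by omega, Or.inl (by omega)⟩
    · have hba : a - b = (j : ZMod n) := by rw [hj3]; ring
      have hab : (a-b).val = j := by rw [hba, ZMod.val_natCast_of_lt (by omega)]
      have hsum := val_sub_sum a b (by intro hc; subst hc; simp at hne)
      exact ⟨by omega, Or.inr (by omega)⟩
  · rintro ⟨hne, h⟩
    have hbane : b - a ≠ 0 := by
      intro hc; rw [hc] at hne; simp at hne
    have habne : b ≠ a := by
      intro hc; apply hbane; rw [hc]; ring
    have hsum := val_sub_sum a b (Ne.symm habne)
    refine ⟨habne.symm, ?_⟩
    rcases h with h | h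
    · left
      refine ⟨(b-a).val, by omega, h, ?_⟩
      have hc : ((b-a).val : ZMod n) = b - a := by simp [ZMod.natCast_val, ZMod.cast_id]
      rw [hc]; ring
    · right
      have l1 := ZMod.val_lt (b-a)
      have l2 := ZMod.val_lt (a-b)
      refine ⟨(a-b).val, by omega, by omega, ?_⟩
      have hc : ((a-b).val : ZMod n) = a - b := by simp [ZMod.natCast_val, ZMod.cast_id]
      rw [hc]; ring

lemma off_add (u : ZMod n) (k l : ℕ) : u + ((k + l : ℕ) : ZMod n) = (u + (k:ℕ)) + ((l:ℕ) : ZMod n) := by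
  push_cast; ring

lemma off_reduce (u : ZMod n) (k : ℕ) : u + ((k + n : ℕ) : ZMod n) = u + (k : ℕ) := by
  push_cast [ZMod.natCast_self]; ring

lemma off_val (u : ZMod n) (k₁ k₂ : ℕ) (h₁ : k₁ ≤ k₂) (h₂ : k₂ < n) :
    ((u + (k₂:ℕ)) - (u + (k₁:ℕ))).val = k₂ - k₁ := by
  have h : (u + (k₂:ℕ)) - (u + (k₁:ℕ)) = ((k₂ - k₁ : ℕ) : ZMod n) := by
    push_cast [Nat.cast_sub h₁]; ring
  rw [h, ZMod.val_natCast_of_lt (by omega)]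

lemma eq_off (u : ZMod n) (k₁ k₂ : ℕ) (h₁ : k₁ ≤ k₂) (h₂ : k₂ < n) :
    (u + (k₁:ℕ) = u + (k₂:ℕ)) ↔ k₁ = k₂ := by
  constructor
  · intro h
    have hv := off_val u k₁ k₂ h₁ h₂
    rw [← h] at hv
    simp at hv
    omega
  · intro h; rw [h]

lemma adj_off {t : ℕ} (ht : t = n / 4) (u : ZMod n) (k₁ k₂ : ℕ) (h₁ : k₁ ≤ k₂) (h₂ : k₂ < n) :
    (circulant n).Adj (u + (k₁:ℕ)) (u + (k₂:ℕ)) ↔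
      (k₂ - k₁ ≠ 0 ∧ (k₂ - k₁ ≤ t ∨ n - (k₂ - k₁) ≤ t)) := by
  rw [adjv ht, off_val u k₁ k₂ h₁ h₂]

lemma cast_eq_cast (a b : ℕ) (ha : a < n) (hb : b < n) : ((a : ZMod n) = (b : ZMod n)) ↔ a = b := by
  constructor
  · intro h
    have hv := ZMod.val_natCast_of_lt ha
    rw [h, ZMod.val_natCast_of_lt hb] at hv
    omega
  · intro h; rw [h]

lemma off_zero (u : ZMod n) : u + ((0:ℕ) : ZMod n) = u := by simp

lemma zmod_self_cast (x : ZMod n) : x = x + ((0:ℕ):ZMod n) := by simp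

end CDT

/-- Bundled context for the main argument. -/
structure Ctx (n : ℕ) : Type where
  t : ℕ
  m : ℕ
  X : ZMod n → Prop
  Y : ZMod n → Prop
  s : ZMod n → Bool
  hn : n = 2*m + 2*t + 1
  htm : t ≤ m
  hmt : m ≤ t + 1
  ht1 : 1 ≤ t
  ht4 : t = n / 4
  disj : ∀ x, ¬(X x ∧ Y x)
  cover : ∀ x, (X x ∨ Y x) ↔ (x ≠ 0 ∧ x ≠ ((m : ℕ) : ZMod n))
  star : ∀ a b, X a → Y b → ((circulant n).Adj a b ↔ s a ≠ s b)
  x2 : ∃ a b, X a ∧ X b ∧ a ≠ b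
  y2 : ∃ a b, Y a ∧ Y b ∧ a ≠ b

namespace Ctx
variable {n : ℕ} [NeZero n] (c : Ctx n)

def symm : Ctx n where
  t := c.t
  m := c.m
  X := c.Y
  Y := c.X
  s := c.s
  hn := c.hn
  htm := c.htm
  hmt := c.hmt
  ht1 := c.ht1
  ht4 := c.ht4
  disj := fun x h => c.disj x ⟨h.2, h.1⟩
  cover := fun x => (or_comm).symm.trans (c.cover x) |>.symm |>.symm
  star := by
    intro a b ha hb
    rw [(circulant n).adj_comm, c.star b a hb ha]
    exact ⟨Ne.symm, Ne.symm⟩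
  x2 := c.y2
  y2 := c.x2

lemma sNe {a b : ZMod n} (ha : c.X a) (hb : c.Y b) (h : (circulant n).Adj a b) :
    c.s a ≠ c.s b := (c.star a b ha hb).mp h

lemma sEq {a b : ZMod n} (ha : c.X a) (hb : c.Y b) (h : ¬ (circulant n).Adj a b) :
    c.s a = c.s b := by
  by_contra hc
  exact h ((c.star a b ha hb).mpr hc)

lemma tri (x : ZMod n) : c.X x ∨ c.Y x ∨ x = 0 ∨ x = ((c.m : ℕ) : ZMod n) := by
  by_cases h : x ≠ 0 ∧ x ≠ ((c.m : ℕ) : ZMod n)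
  · rcases (c.cover x).mpr h with h' | h'
    · exact Or.inl h'
    · exact Or.inr (Or.inl h')
  · push_neg at h
    by_cases h0 : x = 0
    · exact Or.inr (Or.inr (Or.inl h0))
    · exact Or.inr (Or.inr (Or.inr (h h0)))

lemma inV_of_X {x : ZMod n} (h : c.X x) : x ≠ 0 ∧ x ≠ ((c.m : ℕ) : ZMod n) :=
  (c.cover x).mp (Or.inl h)

lemma inV_of_Y {x : ZMod n} (h : c.Y x) : x ≠ 0 ∧ x ≠ ((c.m : ℕ) : ZMod n) :=
  (c.cover x).mp (Or.inr h)

lemma ne_of_XY {a b : ZMod n} (ha : c.X a) (hb : c.Y b) : a ≠ b := by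
  intro h; exact c.disj a ⟨ha, h ▸ hb⟩

end Ctx

namespace CDT
variable {n : ℕ} [NeZero n]

lemma adj_off0 {t : ℕ} (ht : t = n / 4) (u : ZMod n) (k : ℕ) (hk : k < n) :
    (circulant n).Adj u (u + (k:ℕ)) ↔ (k ≠ 0 ∧ (k ≤ t ∨ n - k ≤ t)) := by
  have h := adj_off ht u 0 k (Nat.zero_le k) hk
  simpa using h

lemma repr_off (u y : ZMod n) : y = u + (((y-u).val : ℕ) : ZMod n) := by
  simp [ZMod.natCast_val, ZMod.cast_id]

/-- gap-1 same-part pair with differing switch value: other part inside 2 explicit points -/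
lemma lemA (c : Ctx n) (u : ZMod n) (h0 : c.X u) (h1 : c.X (u + ((1:ℕ):ZMod n)))
    (hs : c.s u ≠ c.s (u + ((1:ℕ):ZMod n))) :
    ∀ y, c.Y y → y = u + ((n - c.t :ℕ):ZMod n) ∨ y = u + ((c.t + 1 :ℕ):ZMod n) := by
  intro y hy
  have hn := c.hn; have htm := c.htm; have hmt := c.hmt; have ht1 := c.ht1
  set t := c.t with htdef
  set k := (y - u).val with hk
  have hklt : k < n := ZMod.val_lt _
  have hyeq : y = u + (k : ℕ) := repr_off u y
  have hk0 : k ≠ 0 := by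
    intro h; apply c.disj u
    refine ⟨h0, ?_⟩
    have : y = u := by rw [hyeq, h]; simp
    rwa [this] at hy
  have hk1 : k ≠ 1 := by
    intro h; apply c.disj (u + ((1:ℕ):ZMod n))
    refine ⟨h1, ?_⟩
    have : y = u + ((1:ℕ):ZMod n) := by rw [hyeq, h]
    rwa [this] at hy
  have hA0 : (circulant n).Adj u y ↔ (k ≠ 0 ∧ (k ≤ t ∨ n - k ≤ t)) := by
    rw [hyeq]; exact adj_off0 c.ht4 u k hklt
  have hA1 : (circulant n).Adj (u + ((1:ℕ):ZMod n)) y ↔ (k - 1 ≠ 0 ∧ (k - 1 ≤ t ∨ n - (k-1) ≤ t)) := by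
    rw [hyeq]; exact adj_off c.ht4 u 1 k (by omega) hklt
  have hS0 := c.star u y h0 hy
  have hS1 := c.star _ y h1 hy
  have hne : ¬ ((circulant n).Adj u y ↔ (circulant n).Adj (u + ((1:ℕ):ZMod n)) y) := by
    rw [hS0, hS1]
    revert hs
    cases (c.s u) <;> cases (c.s (u + ((1:ℕ):ZMod n))) <;> cases (c.s y) <;> simp
  rw [hA0, hA1] at hne
  have hgoal : k = n - t ∨ k = t + 1 := by omega
  rcases hgoal with h | h
  · left; rw [hyeq, h]
  · right; rw [hyeq, h]

/-- no gap-1 same-part pair has differing switch value -/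
lemma caseII (c : Ctx n) (u : ZMod n) (h0 : c.X u) (h1 : c.X (u + ((1:ℕ):ZMod n)))
    (hs : c.s u ≠ c.s (u + ((1:ℕ):ZMod n))) : False := by
  have hn := c.hn; have htm := c.htm; have hmt := c.hmt; have ht1 := c.ht1
  set t := c.t with htdef
  set m := c.m with hmdef
  obtain ⟨y₁, y₂, hy₁, hy₂, hyne⟩ := c.y2
  have hsub := lemA c u h0 h1 hs
  set C := u + ((n - t :ℕ):ZMod n) with hCdef
  set D := u + ((t + 1 :ℕ):ZMod n) with hDdef
  have hCD : C ≠ D := by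
    rw [hCdef, hDdef]
    intro h
    have := (eq_off u (t+1) (n-t) (by omega) (by omega)).mp h.symm
    omega
  have hYC : c.Y C ∧ c.Y D := by
    rcases hsub y₁ hy₁ with e1 | e1 <;> rcases hsub y₂ hy₂ with e2 | e2
    · exact absurd (e1.trans e2.symm) hyne
    · exact ⟨e1 ▸ hy₁, e2 ▸ hy₂⟩
    · exact ⟨e2 ▸ hy₂, e1 ▸ hy₁⟩
    · exact absurd (e1.trans e2.symm) hyne
  obtain ⟨hC, hD⟩ := hYC
  -- s C ≠ s u,  s D = s u
  have hAC : (circulant n).Adj u C := by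
    rw [hCdef, adj_off0 c.ht4 u (n-t) (by omega)]
    omega
  have hAD : ¬ (circulant n).Adj u D := by
    rw [hDdef, adj_off0 c.ht4 u (t+1) (by omega)]
    omega
  have hsC := c.sNe h0 hC hAC
  have hsD := c.sEq h0 hD hAD
  -- the test vertex
  set z := u + ((t + 1 + m :ℕ):ZMod n) with hzdef
  rcases c.tri z with hXz | hYz | hz0 | hzm
  · -- z in X : adjacency to C and D both ↔ m ≤ t, contradiction with s C ≠ s D
    have hAzC : (circulant n).Adj z C ↔ (m ≤ t) := by
      rw [hzdef, hCdef, adj_off c.ht4 u (t+1+m) (n-t) (by omega) (by omega)]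
      constructor
      · intro ⟨_, h⟩; omega
      · intro h; omega
    have hAzD : (circulant n).Adj z D ↔ (m ≤ t) := by
      rw [(circulant n).adj_comm, hzdef, hDdef,
        adj_off c.ht4 u (t+1) (t+1+m) (by omega) (by omega)]
      constructor
      · intro ⟨_, h⟩; omega
      · intro h; omega
    have e1 := c.star z C hXz hC
    have e2 := c.star z D hXz hD
    rw [hAzC] at e1; rw [hAzD] at e2
    have : c.s C = c.s D := by
      by_cases h : m ≤ t
      · have a1 := e1.mp h; have a2 := e2.mp h
        revert a1 a2; cases (c.s z) <;> cases (c.s C) <;> cases (c.s D) <;> simp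
      · have a1 : ¬ c.s z ≠ c.s C := fun hh => h (e1.mpr hh)
        have a2 : ¬ c.s z ≠ c.s D := fun hh => h (e2.mpr hh)
        revert a1 a2; cases (c.s z) <;> cases (c.s C) <;> cases (c.s D) <;> simp
    rw [this] at hsC
    exact hsC hsD
  · rcases hsub z hYz with h | h
    · rw [hzdef] at h
      have := (eq_off u (t+1+m) (n-t) (by omega) (by omega)).mp h
      omega
    · rw [hzdef] at h
      have := (eq_off u (t+1) (t+1+m) (by omega) (by omega)).mp h.symm
      omega
  · -- z = 0 : C = m̂, contradiction
    have hCm : C = ((m:ℕ) : ZMod n) := by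
      have hsplit : n - t = (t+1+m) + m := by omega
      rw [hCdef, hsplit, off_add, ← hzdef, hz0, zero_add]
    exact (c.inV_of_Y hC).2 hCm
  · -- z = m̂ : D = 0, contradiction
    have hDm : D = 0 := by
      have hsplit : (t+1) + n = (t+1+m) + (n - m) := by omega
      have h1' : u + (((t+1) + n :ℕ):ZMod n) = u + ((t+1 :ℕ):ZMod n) := off_reduce u (t+1)
      have h2' : u + (((t+1+m) + (n-m) :ℕ):ZMod n) = z + ((n-m :ℕ):ZMod n) := by
        rw [off_add, ← hzdef]
      rw [hDdef, ← h1', hsplit, h2', hzm]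
      have : ((m:ℕ) : ZMod n) + ((n-m :ℕ):ZMod n) = ((m + (n-m) :ℕ) : ZMod n) := by push_cast; ring
      rw [this]
      have : m + (n - m) = n := by omega
      rw [this, ZMod.natCast_self]
    exact (c.inV_of_Y hD).1 hDm

end CDT

namespace CDT
variable {n : ℕ} [NeZero n]

/-- gap-2 same-part pair (periphery removed) with differing switch value:
  other part inside 4 explicit points -/
lemma lemA2 (c : Ctx n) (u : ZMod n) (h0 : c.X u) (h2 : c.X (u + ((2:ℕ):ZMod n)))
    (hR : u + ((1:ℕ):ZMod n) = 0 ∨ u + ((1:ℕ):ZMod n) = ((c.m : ℕ) : ZMod n))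
    (hs : c.s u ≠ c.s (u + ((2:ℕ):ZMod n))) :
    ∀ y, c.Y y → y = u + ((c.t + 1 :ℕ):ZMod n) ∨ y = u + ((c.t + 2 :ℕ):ZMod n) ∨
      y = u + ((n - c.t :ℕ):ZMod n) ∨ y = u + ((n - c.t + 1 :ℕ):ZMod n) := by
  intro y hy
  have hn := c.hn; have htm := c.htm; have hmt := c.hmt; have ht1 := c.ht1
  set t := c.t with htdef
  set k := (y - u).val with hk
  have hklt : k < n := ZMod.val_lt _
  have hyeq : y = u + (k : ℕ) := repr_off u y
  have hk0 : k ≠ 0 := by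
    intro h; apply c.disj u
    refine ⟨h0, ?_⟩
    have hyu : y = u := by rw [hyeq, h]; simp
    rwa [hyu] at hy
  have hk2 : k ≠ 2 := by
    intro h; apply c.disj (u + ((2:ℕ):ZMod n))
    refine ⟨h2, ?_⟩
    have hyu : y = u + ((2:ℕ):ZMod n) := by rw [hyeq, h]
    rwa [hyu] at hy
  have hk1 : k ≠ 1 := by
    intro h
    have hy1 : y = u + ((1:ℕ):ZMod n) := by rw [hyeq, h]
    have hyV := c.inV_of_Y hy
    rcases hR with hr | hr
    · exact hyV.1 (hy1.trans hr)
    · exact hyV.2 (hy1.trans hr)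
  have hA0 : (circulant n).Adj u y ↔ (k ≠ 0 ∧ (k ≤ t ∨ n - k ≤ t)) := by
    rw [hyeq]; exact adj_off0 c.ht4 u k hklt
  have hA2 : (circulant n).Adj (u + ((2:ℕ):ZMod n)) y ↔ (k - 2 ≠ 0 ∧ (k - 2 ≤ t ∨ n - (k-2) ≤ t)) := by
    rw [hyeq]; exact adj_off c.ht4 u 2 k (by omega) hklt
  have hS0 := c.star u y h0 hy
  have hS2 := c.star _ y h2 hy
  have hne : ¬ ((circulant n).Adj u y ↔ (circulant n).Adj (u + ((2:ℕ):ZMod n)) y) := by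
    rw [hS0, hS2]
    revert hs
    cases (c.s u) <;> cases (c.s (u + ((2:ℕ):ZMod n))) <;> cases (c.s y) <;> simp
  rw [hA0, hA2] at hne
  have hgoal : k = t + 1 ∨ k = t + 2 ∨ k = n - t ∨ k = n - t + 1 := by omega
  rcases hgoal with h | h | h | h
  · left; rw [hyeq, h]
  · right; left; rw [hyeq, h]
  · right; right; left; rw [hyeq, h]
  · right; right; right; rw [hyeq, h]

end CDT

namespace CDT
variable {n : ℕ} [NeZero n]

lemma ne_off (u : ZMod n) (k₁ k₂ : ℕ) (h₁ : k₁ < n) (h₂ : k₂ < n) (hne : k₁ ≠ k₂) :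
    u + ((k₁:ℕ):ZMod n) ≠ u + ((k₂:ℕ):ZMod n) := by
  intro h
  rcases le_or_gt k₁ k₂ with hle | hlt
  · exact hne ((eq_off u k₁ k₂ hle h₂).mp h)
  · exact hne (((eq_off u k₂ k₁ (by omega) h₁).mp h.symm).symm)

/-- two of the three points u+k₁ = u+k₂ coincide as elements of {0, m}: helper
    deriving False from a repeated value. -/
lemma pigeon3 {p q r : ZMod n} {mm : ZMod n}
    (hp : p = 0 ∨ p = mm) (hq : q = 0 ∨ q = mm) (hr : r = 0 ∨ r = mm)
    (hpq : p ≠ q) (hpr : p ≠ r) (hqr : q ≠ r) : False := by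
  rcases hp with hp | hp <;> rcases hq with hq | hq <;> rcases hr with hr | hr
  · exact hpq (hp.trans hq.symm)
  · exact hpq (hp.trans hq.symm)
  · exact hpr (hp.trans hr.symm)
  · exact hqr (hq.trans hr.symm)
  · exact hqr (hq.trans hr.symm)
  · exact hpr (hp.trans hr.symm)
  · exact hpq (hp.trans hq.symm)
  · exact hpq (hp.trans hq.symm)

/-- scenario: both points u + (n-t), u + (n-t+1) in the opposite part -/
lemma S12 (c : Ctx n) (u : ZMod n) (h0 : c.X u) (ht2 : 2 ≤ c.t)
    (hR : u + ((1:ℕ):ZMod n) = 0 ∨ u + ((1:ℕ):ZMod n) = ((c.m : ℕ) : ZMod n))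
    (hsub : ∀ y, c.Y y → y = u + ((c.t + 1 :ℕ):ZMod n) ∨ y = u + ((c.t + 2 :ℕ):ZMod n) ∨
      y = u + ((n - c.t :ℕ):ZMod n) ∨ y = u + ((n - c.t + 1 :ℕ):ZMod n))
    (hY1 : c.Y (u + ((n - c.t :ℕ):ZMod n))) (hY2 : c.Y (u + ((n - c.t + 1 :ℕ):ZMod n))) :
    False := by
  have hn := c.hn; have htm := c.htm; have hmt := c.hmt
  set t := c.t with htdef
  set m := c.m with hmdef
  have hAd1 : (circulant n).Adj u (u + ((n - t :ℕ):ZMod n)) := by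
    rw [adj_off0 c.ht4 u (n-t) (by omega)]; omega
  have hAd2 : (circulant n).Adj u (u + ((n - t + 1 :ℕ):ZMod n)) := by
    rw [adj_off0 c.ht4 u (n-t+1) (by omega)]; omega
  have hs1 := c.sNe h0 hY1 hAd1
  have hs2 := c.sNe h0 hY2 hAd2
  set z := u + ((n - 2*t :ℕ):ZMod n) with hzdef
  have hnX : ¬ c.X z := by
    intro hXz
    have hA1 : (circulant n).Adj z (u + ((n - t :ℕ):ZMod n)) := by
      rw [hzdef, adj_off c.ht4 u (n-2*t) (n-t) (by omega) (by omega)]; omega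
    have hA2 : ¬ (circulant n).Adj z (u + ((n - t + 1 :ℕ):ZMod n)) := by
      rw [hzdef, adj_off c.ht4 u (n-2*t) (n-t+1) (by omega) (by omega)]; omega
    have e1 := c.sNe hXz hY1 hA1
    have e2 := c.sEq hXz hY2 hA2
    revert hs1 hs2 e1 e2
    cases (c.s u) <;> cases (c.s z) <;> cases (c.s (u + ((n - t :ℕ):ZMod n))) <;>
      cases (c.s (u + ((n - t + 1 :ℕ):ZMod n))) <;> simp
  have hnY : ¬ c.Y z := by
    intro hYz
    rcases hsub z hYz with h | h | h | h
    · exact ne_off u (n-2*t) (t+1) (by omega) (by omega) (by omega) h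
    · exact ne_off u (n-2*t) (t+2) (by omega) (by omega) (by omega) h
    · exact ne_off u (n-2*t) (n-t) (by omega) (by omega) (by omega) h
    · exact ne_off u (n-2*t) (n-t+1) (by omega) (by omega) (by omega) h
  have hzR : z = 0 ∨ z = ((m:ℕ) : ZMod n) := by
    rcases c.tri z with h | h | h | h
    · exact absurd h hnX
    · exact absurd h hnY
    · exact Or.inl h
    · exact Or.inr h
  -- combos with hR
  have hz_ne_u1 : z ≠ u + ((1:ℕ):ZMod n) :=
    ne_off u (n-2*t) 1 (by omega) (by omega) (by omega)
  rcases hzR with hz | hz <;> rcases hR with hr | hr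
  · exact hz_ne_u1 (hz.trans hr.symm)
  · -- z = 0, u+1 = m : then m̂ = z + (2t+1) = cast(2t+1) so m = 2t+1, contra
    have key : u + ((1:ℕ):ZMod n) = z + ((2*t+1 :ℕ):ZMod n) := by
      rw [hzdef, ← off_add]
      have h1 : (n - 2*t) + (2*t+1) = 1 + n := by omega
      rw [h1, off_reduce]
    rw [hr, hz, zero_add] at key
    have := (cast_eq_cast m (2*t+1) (by omega) (by omega)).mp key
    omega
  · -- z = m, u+1 = 0 : z = (u+1) + (n-2t-1) = cast(n-2t-1), m = n-2t-1 = 2m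
    have key : z = (u + ((1:ℕ):ZMod n)) + ((n-2*t-1 :ℕ):ZMod n) := by
      rw [hzdef, ← off_add]
      have h1 : 1 + (n - 2*t - 1) = n - 2*t := by omega
      rw [h1]
    rw [hz, hr, zero_add] at key
    have := (cast_eq_cast m (n-2*t-1) (by omega) (by omega)).mp key
    omega
  · exact hz_ne_u1 (hz.trans hr.symm)

/-- scenario: both points u + (t+1), u + (t+2) in the opposite part -/
lemma S34 (c : Ctx n) (u : ZMod n) (h0 : c.X u) (ht2 : 2 ≤ c.t)
    (hR : u + ((1:ℕ):ZMod n) = 0 ∨ u + ((1:ℕ):ZMod n) = ((c.m : ℕ) : ZMod n))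
    (hsub : ∀ y, c.Y y → y = u + ((c.t + 1 :ℕ):ZMod n) ∨ y = u + ((c.t + 2 :ℕ):ZMod n) ∨
      y = u + ((n - c.t :ℕ):ZMod n) ∨ y = u + ((n - c.t + 1 :ℕ):ZMod n))
    (hY3 : c.Y (u + ((c.t + 1 :ℕ):ZMod n))) (hY4 : c.Y (u + ((c.t + 2 :ℕ):ZMod n))) :
    False := by
  have hn := c.hn; have htm := c.htm; have hmt := c.hmt
  set t := c.t with htdef
  set m := c.m with hmdef
  have hAd3 : ¬ (circulant n).Adj u (u + ((t + 1 :ℕ):ZMod n)) := by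
    rw [adj_off0 c.ht4 u (t+1) (by omega)]; omega
  have hAd4 : ¬ (circulant n).Adj u (u + ((t + 2 :ℕ):ZMod n)) := by
    rw [adj_off0 c.ht4 u (t+2) (by omega)]; omega
  have hs3 := c.sEq h0 hY3 hAd3
  have hs4 := c.sEq h0 hY4 hAd4
  set z := u + ((2*t+2 :ℕ):ZMod n) with hzdef
  have hnX : ¬ c.X z := by
    intro hXz
    have hA3 : ¬ (circulant n).Adj z (u + ((t + 1 :ℕ):ZMod n)) := by
      rw [hzdef, (circulant n).adj_comm,
        adj_off c.ht4 u (t+1) (2*t+2) (by omega) (by omega)]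
      omega
    have hA4 : (circulant n).Adj z (u + ((t + 2 :ℕ):ZMod n)) := by
      rw [hzdef, (circulant n).adj_comm,
        adj_off c.ht4 u (t+2) (2*t+2) (by omega) (by omega)]
      omega
    have e3 := c.sEq hXz hY3 hA3
    have e4 := c.sNe hXz hY4 hA4
    revert hs3 hs4 e3 e4
    cases (c.s u) <;> cases (c.s z) <;> cases (c.s (u + ((t + 1 :ℕ):ZMod n))) <;>
      cases (c.s (u + ((t + 2 :ℕ):ZMod n))) <;> simp
  have hnY : ¬ c.Y z := by
    intro hYz
    rcases hsub z hYz with h | h | h | h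
    · exact ne_off u (2*t+2) (t+1) (by omega) (by omega) (by omega) h
    · exact ne_off u (2*t+2) (t+2) (by omega) (by omega) (by omega) h
    · exact ne_off u (2*t+2) (n-t) (by omega) (by omega) (by omega) h
    · exact ne_off u (2*t+2) (n-t+1) (by omega) (by omega) (by omega) h
  have hzR : z = 0 ∨ z = ((m:ℕ) : ZMod n) := by
    rcases c.tri z with h | h | h | h
    · exact absurd h hnX
    · exact absurd h hnY
    · exact Or.inl h
    · exact Or.inr h
  have hz_ne_u1 : z ≠ u + ((1:ℕ):ZMod n) :=
    ne_off u (2*t+2) 1 (by omega) (by omega) (by omega)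
  rcases hzR with hz | hz <;> rcases hR with hr | hr
  · exact hz_ne_u1 (hz.trans hr.symm)
  · -- z = 0, u+1 = m : m̂ = z + (n-2t-1) = cast(n-2t-1) = cast(2m) so m = 2m
    have key : u + ((1:ℕ):ZMod n) = z + ((n-2*t-1 :ℕ):ZMod n) := by
      rw [hzdef, ← off_add]
      have h1 : (2*t+2) + (n-2*t-1) = 1 + n := by omega
      rw [h1, off_reduce]
    rw [hr, hz, zero_add] at key
    have := (cast_eq_cast m (n-2*t-1) (by omega) (by omega)).mp key
    omega
  · -- z = m, u+1 = 0 : z = (u+1) + (2t+1) = cast(2t+1), m = 2t+1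
    have key : z = (u + ((1:ℕ):ZMod n)) + ((2*t+1 :ℕ):ZMod n) := by
      rw [hzdef, ← off_add]
      have h1 : 1 + (2*t+1) = 2*t+2 := by omega
      rw [h1]
    rw [hz, hr, zero_add] at key
    have := (cast_eq_cast m (2*t+1) (by omega) (by omega)).mp key
    omega
  · exact hz_ne_u1 (hz.trans hr.symm)

end CDT

namespace CDT
variable {n : ℕ} [NeZero n]

/-- the special n = 9 configuration -/
lemma L9 (c : Ctx n) (u : ZMod n) (h0 : c.X u) (h9 : n = 9) (ht9 : c.t = 2) (hm9 : c.m = 2)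
    (hR : u + ((1:ℕ):ZMod n) = 0 ∨ u + ((1:ℕ):ZMod n) = ((c.m : ℕ) : ZMod n))
    (hsub : ∀ y, c.Y y → y = u + ((c.t + 1 :ℕ):ZMod n) ∨ y = u + ((c.t + 2 :ℕ):ZMod n) ∨
      y = u + ((n - c.t :ℕ):ZMod n) ∨ y = u + ((n - c.t + 1 :ℕ):ZMod n))
    (hA : c.Y (u + ((n - c.t :ℕ):ZMod n))) (hB : c.Y (u + ((c.t + 2 :ℕ):ZMod n))) :
    False := by
  have hn := c.hn; have htm := c.htm; have hmt := c.hmt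
  set t := c.t with htdef
  set m := c.m with hmdef
  have hAdA : (circulant n).Adj u (u + ((n - t :ℕ):ZMod n)) := by
    rw [adj_off0 c.ht4 u (n-t) (by omega)]; omega
  have hAdB : ¬ (circulant n).Adj u (u + ((t + 2 :ℕ):ZMod n)) := by
    rw [adj_off0 c.ht4 u (t+2) (by omega)]; omega
  have hsA := c.sNe h0 hA hAdA
  have hsB := c.sEq h0 hB hAdB
  have key : ∀ l : ℕ, l = t+3 ∨ l = t+4 → (u + ((l:ℕ):ZMod n) = 0 ∨ u + ((l:ℕ):ZMod n) = ((m:ℕ):ZMod n)) := by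
    intro l hl
    set z := u + ((l:ℕ):ZMod n) with hzdef
    have hnX : ¬ c.X z := by
      intro hXz
      have hA1 : (circulant n).Adj z (u + ((n - t :ℕ):ZMod n)) := by
        rw [hzdef, adj_off c.ht4 u l (n-t) (by omega) (by omega)]; omega
      have hA2 : (circulant n).Adj z (u + ((t + 2 :ℕ):ZMod n)) := by
        rw [hzdef, (circulant n).adj_comm, adj_off c.ht4 u (t+2) l (by omega) (by omega)]
        omega
      have e1 := c.sNe hXz hA hA1
      have e2 := c.sNe hXz hB hA2
      revert hsA hsB e1 e2
      cases (c.s u) <;> cases (c.s z) <;> cases (c.s (u + ((n - t :ℕ):ZMod n))) <;>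
        cases (c.s (u + ((t + 2 :ℕ):ZMod n))) <;> simp
    have hnY : ¬ c.Y z := by
      intro hYz
      rcases hsub z hYz with h | h | h | h
      · exact ne_off u l (t+1) (by omega) (by omega) (by omega) h
      · exact ne_off u l (t+2) (by omega) (by omega) (by omega) h
      · exact ne_off u l (n-t) (by omega) (by omega) (by omega) h
      · exact ne_off u l (n-t+1) (by omega) (by omega) (by omega) h
    rcases c.tri z with h | h | h | h
    · exact absurd h hnX
    · exact absurd h hnY
    · exact Or.inl h
    · exact Or.inr h
  have k1 := key (t+3) (Or.inl rfl)
  have k2 := key (t+4) (Or.inr rfl)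
  exact pigeon3 k1 k2 hR
    (ne_off u (t+3) (t+4) (by omega) (by omega) (by omega))
    (ne_off u (t+3) 1 (by omega) (by omega) (by omega))
    (ne_off u (t+4) 1 (by omega) (by omega) (by omega))

end CDT

namespace CDT
variable {n : ℕ} [NeZero n]

/-- mixed scenario: one point on each side of u in the opposite part -/
lemma Smix (c : Ctx n) (u : ZMod n) (h0 : c.X u) (ht2 : 2 ≤ c.t)
    (hR : u + ((1:ℕ):ZMod n) = 0 ∨ u + ((1:ℕ):ZMod n) = ((c.m : ℕ) : ZMod n))
    (hsub : ∀ y, c.Y y → y = u + ((c.t + 1 :ℕ):ZMod n) ∨ y = u + ((c.t + 2 :ℕ):ZMod n) ∨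
      y = u + ((n - c.t :ℕ):ZMod n) ∨ y = u + ((n - c.t + 1 :ℕ):ZMod n))
    (em ep : ℕ) (hem : em ≤ 1) (hep : ep ≤ 1)
    (hcm : c.Y (u + ((n - c.t + em :ℕ):ZMod n))) (hcp : c.Y (u + ((c.t + 1 + ep :ℕ):ZMod n))) :
    False := by
  have hn := c.hn; have htm := c.htm; have hmt := c.hmt
  set t := c.t with htdef
  set m := c.m with hmdef
  -- P-side constraint
  have hPp : ¬ (c.X (u + ((n - 2*t - 1 + em :ℕ):ZMod n)) ∧ c.X (u + ((n - 2*t + em :ℕ):ZMod n))) := by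
    rintro ⟨hx1, hx2⟩
    have hnAd : ¬ (circulant n).Adj (u + ((n - 2*t - 1 + em :ℕ):ZMod n)) (u + ((n - t + em :ℕ):ZMod n)) := by
      rw [adj_off c.ht4 u (n-2*t-1+em) (n-t+em) (by omega) (by omega)]; omega
    have hAd : (circulant n).Adj (u + ((n - 2*t + em :ℕ):ZMod n)) (u + ((n - t + em :ℕ):ZMod n)) := by
      rw [adj_off c.ht4 u (n-2*t+em) (n-t+em) (by omega) (by omega)]; omega
    have hs1 := c.sEq hx1 hcm hnAd
    have hs2 := c.sNe hx2 hcm hAd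
    have hstep : u + ((n - 2*t + em :ℕ):ZMod n) = (u + ((n - 2*t - 1 + em :ℕ):ZMod n)) + ((1:ℕ):ZMod n) := by
      rw [← off_add]
      congr 1
      have : (n - 2*t - 1 + em) + 1 = n - 2*t + em := by omega
      rw [this]
    apply caseII c (u + ((n - 2*t - 1 + em :ℕ):ZMod n)) hx1 (hstep ▸ hx2)
    rw [← hstep]
    revert hs1 hs2
    cases (c.s (u + ((n - 2*t - 1 + em :ℕ):ZMod n))) <;>
      cases (c.s (u + ((n - 2*t + em :ℕ):ZMod n))) <;>
      cases (c.s (u + ((n - t + em :ℕ):ZMod n))) <;> simp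
  -- Q-side constraint
  have hQq : ¬ (c.X (u + ((2*t + 1 + ep :ℕ):ZMod n)) ∧ c.X (u + ((2*t + 2 + ep :ℕ):ZMod n))) := by
    rintro ⟨hx1, hx2⟩
    have hAd : (circulant n).Adj (u + ((2*t + 1 + ep :ℕ):ZMod n)) (u + ((t + 1 + ep :ℕ):ZMod n)) := by
      rw [(circulant n).adj_comm, adj_off c.ht4 u (t+1+ep) (2*t+1+ep) (by omega) (by omega)]
      omega
    have hnAd : ¬ (circulant n).Adj (u + ((2*t + 2 + ep :ℕ):ZMod n)) (u + ((t + 1 + ep :ℕ):ZMod n)) := by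
      rw [(circulant n).adj_comm, adj_off c.ht4 u (t+1+ep) (2*t+2+ep) (by omega) (by omega)]
      omega
    have hs1 := c.sNe hx1 hcp hAd
    have hs2 := c.sEq hx2 hcp hnAd
    have hstep : u + ((2*t + 2 + ep :ℕ):ZMod n) = (u + ((2*t + 1 + ep :ℕ):ZMod n)) + ((1:ℕ):ZMod n) := by
      rw [← off_add]
      congr 1
      have : (2*t + 1 + ep) + 1 = 2*t + 2 + ep := by omega
      rw [this]
    apply caseII c (u + ((2*t + 1 + ep :ℕ):ZMod n)) hx1 (hstep ▸ hx2)
    rw [← hstep]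
    revert hs1 hs2
    cases (c.s (u + ((2*t + 1 + ep :ℕ):ZMod n))) <;>
      cases (c.s (u + ((2*t + 2 + ep :ℕ):ZMod n))) <;>
      cases (c.s (u + ((t + 1 + ep :ℕ):ZMod n))) <;> simp
  -- extract non-X points
  obtain ⟨j₁, hj₁, hPnx⟩ : ∃ j₁, j₁ ≤ 1 ∧ ¬ c.X (u + ((n - 2*t - 1 + em + j₁ :ℕ):ZMod n)) := by
    by_cases h : c.X (u + ((n - 2*t - 1 + em :ℕ):ZMod n))
    · refine ⟨1, le_refl 1, ?_⟩
      have he : n - 2*t - 1 + em + 1 = n - 2*t + em := by omega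
      rw [he]
      exact fun hx2 => hPp ⟨h, hx2⟩
    · refine ⟨0, by omega, ?_⟩
      have he : n - 2*t - 1 + em + 0 = n - 2*t - 1 + em := by omega
      rw [he]
      exact h
  obtain ⟨j₂, hj₂, hQnx⟩ : ∃ j₂, j₂ ≤ 1 ∧ ¬ c.X (u + ((2*t + 1 + ep + j₂ :ℕ):ZMod n)) := by
    by_cases h : c.X (u + ((2*t + 1 + ep :ℕ):ZMod n))
    · refine ⟨1, le_refl 1, ?_⟩
      have he : 2*t + 1 + ep + 1 = 2*t + 2 + ep := by omega
      rw [he]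
      exact fun hx2 => hQq ⟨h, hx2⟩
    · refine ⟨0, by omega, ?_⟩
      have he : 2*t + 1 + ep + 0 = 2*t + 1 + ep := by omega
      rw [he]
      exact h
  set a := n - 2*t - 1 + em + j₁ with hadef
  set b := 2*t + 1 + ep + j₂ with hbdef
  -- P = u + a is 0 or m (or the n=9 special case)
  have hPR : u + ((a:ℕ):ZMod n) = 0 ∨ u + ((a:ℕ):ZMod n) = ((m:ℕ):ZMod n) := by
    rcases c.tri (u + ((a:ℕ):ZMod n)) with h | h | h | h
    · exact absurd h hPnx
    · rcases hsub _ h with h' | h' | h' | h'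
      · exact absurd h' (ne_off u a (t+1) (by omega) (by omega) (by omega))
      · -- leak: a = t+2 possible only when n = 9
        by_cases hlk : a = t + 2
        · exfalso
          have h9 : n = 9 ∧ t = 2 ∧ m = 2 ∧ em = 0 ∧ j₁ = 0 := by omega
          have hcm' : c.Y (u + ((n - t :ℕ):ZMod n)) := by
            have he : n - t + em = n - t := by omega
            rwa [he] at hcm
          have hB' : c.Y (u + ((t + 2 :ℕ):ZMod n)) := by
            rw [← hlk]; exact h
          exact L9 c u h0 h9.1 h9.2.1 h9.2.2.1 hR hsub hcm' hB'
        · exact absurd h' (ne_off u a (t+2) (by omega) (by omega) hlk)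
      · exact absurd h' (ne_off u a (n-t) (by omega) (by omega) (by omega))
      · exact absurd h' (ne_off u a (n-t+1) (by omega) (by omega) (by omega))
    · exact Or.inl h
    · exact Or.inr h
  have hQR : u + ((b:ℕ):ZMod n) = 0 ∨ u + ((b:ℕ):ZMod n) = ((m:ℕ):ZMod n) := by
    rcases c.tri (u + ((b:ℕ):ZMod n)) with h | h | h | h
    · exact absurd h hQnx
    · rcases hsub _ h with h' | h' | h' | h'
      · exact absurd h' (ne_off u b (t+1) (by omega) (by omega) (by omega))
      · exact absurd h' (ne_off u b (t+2) (by omega) (by omega) (by omega))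
      · -- leak: b = n-t possible only when n = 9
        by_cases hlk : b = n - t
        · exfalso
          have h9 : n = 9 ∧ t = 2 ∧ m = 2 ∧ ep = 1 ∧ j₂ = 1 := by omega
          have hA' : c.Y (u + ((n - t :ℕ):ZMod n)) := by
            rw [← hlk]; exact h
          have hB' : c.Y (u + ((t + 2 :ℕ):ZMod n)) := by
            have he : t + 1 + ep = t + 2 := by omega
            rwa [he] at hcp
          exact L9 c u h0 h9.1 h9.2.1 h9.2.2.1 hR hsub hA' hB'
        · exact absurd h' (ne_off u b (n-t) (by omega) (by omega) hlk)
      · exact absurd h' (ne_off u b (n-t+1) (by omega) (by omega) (by omega))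
    · exact Or.inl h
    · exact Or.inr h
  -- final pigeonhole with u+1
  have hPu1 : u + ((a:ℕ):ZMod n) ≠ u + ((1:ℕ):ZMod n) :=
    ne_off u a 1 (by omega) (by omega) (by omega)
  have hQu1 : u + ((b:ℕ):ZMod n) ≠ u + ((1:ℕ):ZMod n) :=
    ne_off u b 1 (by omega) (by omega) (by omega)
  have hPkey : u + ((a:ℕ):ZMod n) = (u + ((1:ℕ):ZMod n)) + ((a - 1 :ℕ):ZMod n) := by
    rw [← off_add]
    congr 1
    have : 1 + (a - 1) = a := by omega
    rw [this]
  have hQkey : u + ((b:ℕ):ZMod n) = (u + ((1:ℕ):ZMod n)) + ((b - 1 :ℕ):ZMod n) := by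
    rw [← off_add]
    congr 1
    have : 1 + (b - 1) = b := by omega
    rw [this]
  rcases hPR with hp | hp <;> rcases hQR with hq | hq <;> rcases hR with hr | hr
  · exact hPu1 (hp.trans hr.symm)
  · -- P=0, Q=0, u1=m : 0 = P = m̂ + (a-1) = cast(m+a-1)
    rw [hr, hp] at hPkey
    have hcast : ((m:ℕ):ZMod n) + ((a - 1 :ℕ):ZMod n) = ((m + (a-1) :ℕ):ZMod n) := by
      push_cast; ring
    rw [hcast] at hPkey
    have h0' : ((0:ℕ):ZMod n) = ((m + (a-1) :ℕ):ZMod n) := by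
      rw [← hPkey]; simp
    have := (cast_eq_cast 0 (m + (a-1)) (by omega) (by omega)).mp h0'
    omega
  · exact hPu1 (hp.trans hr.symm)
  · exact hQu1 (hq.trans hr.symm)
  · exact hQu1 (hq.trans hr.symm)
  · -- P=m, Q=0, u1=m : 0 = Q = m̂ + (b-1) = cast(m+b-1)
    rw [hr, hq] at hQkey
    have hcast : ((m:ℕ):ZMod n) + ((b - 1 :ℕ):ZMod n) = ((m + (b-1) :ℕ):ZMod n) := by
      push_cast; ring
    rw [hcast] at hQkey
    have h0' : ((0:ℕ):ZMod n) = ((m + (b-1) :ℕ):ZMod n) := by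
      rw [← hQkey]; simp
    have := (cast_eq_cast 0 (m + (b-1)) (by omega) (by omega)).mp h0'
    omega
  · -- P=m, Q=m, u1=0 : m̂ = P = 0 + (a-1) = cast(a-1)
    rw [hr, hp, zero_add] at hPkey
    have := (cast_eq_cast m (a-1) (by omega) (by omega)).mp hPkey
    omega
  · exact hPu1 (hp.trans hr.symm)

end CDT

namespace CDT
variable {n : ℕ} [NeZero n]

/-- no gap-2 same-part pair (across a removed vertex) has differing switch value -/
lemma caseIII (c : Ctx n) (u : ZMod n) (h0 : c.X u) (h2 : c.X (u + ((2:ℕ):ZMod n)))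
    (hR : u + ((1:ℕ):ZMod n) = 0 ∨ u + ((1:ℕ):ZMod n) = ((c.m : ℕ) : ZMod n))
    (hs : c.s u ≠ c.s (u + ((2:ℕ):ZMod n))) (ht2 : 2 ≤ c.t) : False := by
  have hn := c.hn; have htm := c.htm; have hmt := c.hmt
  have hsub := lemA2 c u h0 h2 hR hs
  set t := c.t with htdef
  obtain ⟨y₁, y₂, hy₁, hy₂, hyne⟩ := c.y2
  have Ymem : ∀ y, c.Y y → y = u + ((t + 1 :ℕ):ZMod n) ∨ y = u + ((t + 2 :ℕ):ZMod n) ∨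
      y = u + ((n - t :ℕ):ZMod n) ∨ y = u + ((n - t + 1 :ℕ):ZMod n) := hsub
  have smix : ∀ em ep : ℕ, em ≤ 1 → ep ≤ 1 →
      c.Y (u + ((n - t + em :ℕ):ZMod n)) → c.Y (u + ((t + 1 + ep :ℕ):ZMod n)) → False :=
    fun em ep h1 h2' hm hp => Smix c u h0 ht2 hR hsub em ep h1 h2' hm hp
  have cv0 : n - t + 0 = n - t := by omega
  have cv1 : t + 1 + 0 = t + 1 := by omega
  have cv2 : t + 1 + 1 = t + 2 := by omega
  have mix00 : c.Y (u + ((n - t :ℕ):ZMod n)) → c.Y (u + ((t + 1 :ℕ):ZMod n)) → False := by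
    intro ha hb
    exact smix 0 0 (by omega) (by omega) (by rw [cv0]; exact ha) (by rw [cv1]; exact hb)
  have mix01 : c.Y (u + ((n - t :ℕ):ZMod n)) → c.Y (u + ((t + 2 :ℕ):ZMod n)) → False := by
    intro ha hb
    exact smix 0 1 (by omega) (by omega) (by rw [cv0]; exact ha) (by rw [cv2]; exact hb)
  have mix10 : c.Y (u + ((n - t + 1 :ℕ):ZMod n)) → c.Y (u + ((t + 1 :ℕ):ZMod n)) → False := by
    intro ha hb
    exact smix 1 0 (by omega) (by omega) ha (by rw [cv1]; exact hb)
  have mix11 : c.Y (u + ((n - t + 1 :ℕ):ZMod n)) → c.Y (u + ((t + 2 :ℕ):ZMod n)) → False := by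
    intro ha hb
    exact smix 1 1 (by omega) (by omega) ha (by rw [cv2]; exact hb)
  rcases Ymem y₁ hy₁ with e1 | e1 | e1 | e1 <;> rcases Ymem y₂ hy₂ with e2 | e2 | e2 | e2
  · exact hyne (e1.trans e2.symm)
  · exact S34 c u h0 ht2 hR hsub (e1 ▸ hy₁) (e2 ▸ hy₂)
  · exact mix00 (e2 ▸ hy₂) (e1 ▸ hy₁)
  · exact mix10 (e2 ▸ hy₂) (e1 ▸ hy₁)
  · exact S34 c u h0 ht2 hR hsub (e2 ▸ hy₂) (e1 ▸ hy₁)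
  · exact hyne (e1.trans e2.symm)
  · exact mix01 (e2 ▸ hy₂) (e1 ▸ hy₁)
  · exact mix11 (e2 ▸ hy₂) (e1 ▸ hy₁)
  · exact mix00 (e1 ▸ hy₁) (e2 ▸ hy₂)
  · exact mix01 (e1 ▸ hy₁) (e2 ▸ hy₂)
  · exact hyne (e1.trans e2.symm)
  · exact S12 c u h0 ht2 hR hsub (e1 ▸ hy₁) (e2 ▸ hy₂)
  · exact mix10 (e1 ▸ hy₁) (e2 ▸ hy₂)
  · exact mix11 (e1 ▸ hy₁) (e2 ▸ hy₂)
  · exact S12 c u h0 ht2 hR hsub (e2 ▸ hy₂) (e1 ▸ hy₁)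
  · exact hyne (e1.trans e2.symm)

end CDT

namespace CDT
variable {n : ℕ} [NeZero n]

lemma cast_ne_cast (a b : ℕ) (ha : a < n) (hb : b < n) (h : a ≠ b) :
    ((a:ℕ):ZMod n) ≠ ((b:ℕ):ZMod n) := fun hc => h ((cast_eq_cast a b ha hb).mp hc)

lemma cast_ne_zero (a : ℕ) (ha : a < n) (h : a ≠ 0) : ((a:ℕ):ZMod n) ≠ 0 := by
  have h0 : ((0:ℕ):ZMod n) = 0 := Nat.cast_zero
  rw [← h0]
  exact cast_ne_cast a 0 ha (by omega) h

lemma cast_succ (i : ℕ) (h : 1 ≤ i) : ((i:ℕ):ZMod n) = (((i-1 :ℕ)):ZMod n) + ((1:ℕ):ZMod n) := by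
  have : (i - 1) + 1 = i := by omega
  rw [← Nat.cast_add, this]

/-- propagation of a property along the cycle through consecutive pairs -/
lemma chain (mm : ℕ) (hm2 : 2 ≤ mm) (hmn : mm + 1 < n) (Φ : ZMod n → Prop)
    (h1 : ∀ v : ZMod n, (v ≠ 0 ∧ v ≠ ((mm:ℕ):ZMod n)) →
      (v + ((1:ℕ):ZMod n) ≠ 0 ∧ v + ((1:ℕ):ZMod n) ≠ ((mm:ℕ):ZMod n)) →
      (Φ v ↔ Φ (v + ((1:ℕ):ZMod n))))
    (h2 : ∀ v : ZMod n, (v ≠ 0 ∧ v ≠ ((mm:ℕ):ZMod n)) →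
      (v + ((1:ℕ):ZMod n) = 0 ∨ v + ((1:ℕ):ZMod n) = ((mm:ℕ):ZMod n)) →
      (v + ((2:ℕ):ZMod n) ≠ 0 ∧ v + ((2:ℕ):ZMod n) ≠ ((mm:ℕ):ZMod n)) →
      (Φ v ↔ Φ (v + ((2:ℕ):ZMod n)))) :
    ∀ x y : ZMod n, (x ≠ 0 ∧ x ≠ ((mm:ℕ):ZMod n)) → (y ≠ 0 ∧ y ≠ ((mm:ℕ):ZMod n)) →
      (Φ x ↔ Φ y) := by
  have hn1 : 1 < n := by omega
  have aux : ∀ i : ℕ, 1 ≤ i → i < n → i ≠ mm → (Φ ((1:ℕ):ZMod n) ↔ Φ ((i:ℕ):ZMod n)) := by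
    intro i
    induction i using Nat.strong_induction_on with
    | _ i IH =>
      intro hi1 hin him
      rcases Nat.eq_or_lt_of_le hi1 with h1' | hi2
      · rw [← h1']
      · by_cases hprev : i - 1 = mm
        · -- i = mm + 1, jump over mm from mm - 1
          have him1 : i = mm + 1 := by omega
          have hstep := h2 (((mm - 1 :ℕ)):ZMod n)
            ⟨cast_ne_zero (mm-1) (by omega) (by omega),
             cast_ne_cast (mm-1) mm (by omega) (by omega) (by omega)⟩
            (Or.inr (by rw [← Nat.cast_add]; congr 1; omega))
            ⟨by rw [← Nat.cast_add]
                have he : (mm - 1) + 2 = i := by omega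
                rw [he]
                exact cast_ne_zero i (by omega) (by omega),
             by rw [← Nat.cast_add]
                have he : (mm - 1) + 2 = i := by omega
                rw [he]
                exact cast_ne_cast i mm (by omega) (by omega) (by omega)⟩
          have hstep' : Φ (((mm - 1 :ℕ)):ZMod n) ↔ Φ ((i:ℕ):ZMod n) := by
            rw [hstep]
            rw [← Nat.cast_add]
            have he : (mm - 1) + 2 = i := by omega
            rw [he]
          exact (IH (mm-1) (by omega) (by omega) (by omega) (by omega)).trans hstep'
        · have hstep := h1 (((i - 1 :ℕ)):ZMod n)
            ⟨cast_ne_zero (i-1) (by omega) (by omega),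
             cast_ne_cast (i-1) mm (by omega) (by omega) hprev⟩
            ⟨by rw [← Nat.cast_add]
                have he : (i - 1) + 1 = i := by omega
                rw [he]
                exact cast_ne_zero i (by omega) (by omega),
             by rw [← Nat.cast_add]
                have he : (i - 1) + 1 = i := by omega
                rw [he]
                exact cast_ne_cast i mm (by omega) (by omega) him⟩
          have hstep' : Φ (((i - 1 :ℕ)):ZMod n) ↔ Φ ((i:ℕ):ZMod n) := by
            rw [hstep]
            rw [← Nat.cast_add]
            have he : (i - 1) + 1 = i := by omega
            rw [he]
          exact (IH (i-1) (by omega) (by omega) (by omega) hprev).trans hstep'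
  intro x y hx hy
  have hxv : ((x.val : ℕ) : ZMod n) = x := by simp [ZMod.natCast_val, ZMod.cast_id]
  have hyv : ((y.val : ℕ) : ZMod n) = y := by simp [ZMod.natCast_val, ZMod.cast_id]
  have hx0 : x.val ≠ 0 := fun h => hx.1 (by rw [← hxv, h]; simp)
  have hy0 : y.val ≠ 0 := fun h => hy.1 (by rw [← hyv, h]; simp)
  have hxm : x.val ≠ mm := fun h => hx.2 (by rw [← hxv, h])
  have hym : y.val ≠ mm := fun h => hy.2 (by rw [← hyv, h])
  have a1 := aux x.val (by omega) (ZMod.val_lt x) hxm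
  have a2 := aux y.val (by omega) (ZMod.val_lt y) hym
  rw [hxv] at a1; rw [hyv] at a2
  exact a1.symm.trans a2
end CDT

namespace CDT
variable {n : ℕ} [NeZero n]

lemma sigma_step {P Q : Prop} {a b : Bool} (h : (P ↔ Q) ↔ (a = b)) :
    ((P ↔ (a = true)) ↔ (Q ↔ (b = true))) := by
  cases a <;> cases b <;> simp_all <;> tauto

/-- main contradiction for t ≥ 2 -/
lemma main (c : Ctx n) (ht2 : 2 ≤ c.t) : False := by
  have hn := c.hn; have htm := c.htm; have hmt := c.hmt
  set t := c.t with htdef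
  set m := c.m with hmdef
  have hm2 : 2 ≤ m := le_trans ht2 htm
  have hσ1 : ∀ v : ZMod n, (v ≠ 0 ∧ v ≠ ((m:ℕ):ZMod n)) →
      (v + ((1:ℕ):ZMod n) ≠ 0 ∧ v + ((1:ℕ):ZMod n) ≠ ((m:ℕ):ZMod n)) →
      ((c.X v ↔ c.s v = true) ↔ (c.X (v + ((1:ℕ):ZMod n)) ↔ c.s (v + ((1:ℕ):ZMod n)) = true)) := by
    intro v hv hv1
    have hAdj : (circulant n).Adj v (v + ((1:ℕ):ZMod n)) := by
      rw [adj_off0 c.ht4 v 1 (by omega)]; omega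
    apply sigma_step
    rcases (c.cover v).mpr hv with hXv | hYv <;> rcases (c.cover _).mpr hv1 with hXv1 | hYv1
    · have hse : c.s v = c.s (v + ((1:ℕ):ZMod n)) := by
        by_contra hne
        exact caseII c v hXv hXv1 hne
      exact iff_of_true ⟨fun _ => hXv1, fun _ => hXv⟩ hse
    · have hsd := c.sNe hXv hYv1 hAdj
      have hnX1 : ¬ c.X (v + ((1:ℕ):ZMod n)) := fun h => c.disj _ ⟨h, hYv1⟩
      exact iff_of_false (fun h => hnX1 (h.mp hXv)) hsd
    · have hsd : c.s v ≠ c.s (v + ((1:ℕ):ZMod n)) := fun h => ((c.symm).sNe hYv hXv1 hAdj) h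
      have hnXv : ¬ c.X v := fun h => c.disj _ ⟨h, hYv⟩
      exact iff_of_false (fun h => hnXv (h.mpr hXv1)) hsd
    · have hse : c.s v = c.s (v + ((1:ℕ):ZMod n)) := by
        by_contra hne
        exact caseII (c.symm) v hYv hYv1 hne
      have hnXv : ¬ c.X v := fun h => c.disj _ ⟨h, hYv⟩
      have hnX1 : ¬ c.X (v + ((1:ℕ):ZMod n)) := fun h => c.disj _ ⟨h, hYv1⟩
      exact iff_of_true ⟨fun h => (hnXv h).elim, fun h => (hnX1 h).elim⟩ hse
  have hσ2 : ∀ v : ZMod n, (v ≠ 0 ∧ v ≠ ((m:ℕ):ZMod n)) →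
      (v + ((1:ℕ):ZMod n) = 0 ∨ v + ((1:ℕ):ZMod n) = ((m:ℕ):ZMod n)) →
      (v + ((2:ℕ):ZMod n) ≠ 0 ∧ v + ((2:ℕ):ZMod n) ≠ ((m:ℕ):ZMod n)) →
      ((c.X v ↔ c.s v = true) ↔ (c.X (v + ((2:ℕ):ZMod n)) ↔ c.s (v + ((2:ℕ):ZMod n)) = true)) := by
    intro v hv hR hv2
    have hAdj : (circulant n).Adj v (v + ((2:ℕ):ZMod n)) := by
      rw [adj_off0 c.ht4 v 2 (by omega)]; omega
    apply sigma_step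
    rcases (c.cover v).mpr hv with hXv | hYv <;> rcases (c.cover _).mpr hv2 with hXv2 | hYv2
    · have hse : c.s v = c.s (v + ((2:ℕ):ZMod n)) := by
        by_contra hne
        exact caseIII c v hXv hXv2 hR hne ht2
      exact iff_of_true ⟨fun _ => hXv2, fun _ => hXv⟩ hse
    · have hsd := c.sNe hXv hYv2 hAdj
      have hnX2 : ¬ c.X (v + ((2:ℕ):ZMod n)) := fun h => c.disj _ ⟨h, hYv2⟩
      exact iff_of_false (fun h => hnX2 (h.mp hXv)) hsd
    · have hsd : c.s v ≠ c.s (v + ((2:ℕ):ZMod n)) := fun h => ((c.symm).sNe hYv hXv2 hAdj) h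
      have hnXv : ¬ c.X v := fun h => c.disj _ ⟨h, hYv⟩
      exact iff_of_false (fun h => hnXv (h.mpr hXv2)) hsd
    · have hse : c.s v = c.s (v + ((2:ℕ):ZMod n)) := by
        by_contra hne
        exact caseIII (c.symm) v hYv hYv2 hR hne ht2
      have hnXv : ¬ c.X v := fun h => c.disj _ ⟨h, hYv⟩
      have hnX2 : ¬ c.X (v + ((2:ℕ):ZMod n)) := fun h => c.disj _ ⟨h, hYv2⟩
      exact iff_of_true ⟨fun h => (hnXv h).elim, fun h => (hnX2 h).elim⟩ hse
  have σconst := chain m hm2 (by omega) (fun z => (c.X z ↔ c.s z = true)) hσ1 hσ2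
  have hAll : ∀ a b, c.X a → c.Y b → (circulant n).Adj a b := by
    intro a b ha hb
    have hσ := σconst a b (c.inV_of_X ha) (c.inV_of_Y hb)
    have hnXb : ¬ c.X b := fun h => c.disj _ ⟨h, hb⟩
    have h1 : (c.s a = true) ↔ (c.X b ↔ c.s b = true) :=
      ⟨fun hsa => hσ.mp ⟨fun _ => hsa, fun _ => ha⟩, fun hq => (hσ.mpr hq).mp ha⟩
    have h2 : (c.X b ↔ c.s b = true) ↔ ¬(c.s b = true) :=
      ⟨fun h hb' => hnXb (h.mpr hb'), fun h => ⟨fun hxb => (hnXb hxb).elim, fun hb' => (h hb').elim⟩⟩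
    have key : (c.s a = true) ↔ ¬(c.s b = true) := h1.trans h2
    have hne : c.s a ≠ c.s b := by
      intro he
      rw [he] at key
      exact iff_not_self key
    exact (c.star a b ha hb).mpr hne
  have farz : ∀ (w : ZMod n) (g : ℕ), 1 ≤ g → g ≤ 2 →
      ((c.X w ∧ c.Y (w + ((g:ℕ):ZMod n))) ∨ (c.Y w ∧ c.X (w + ((g:ℕ):ZMod n)))) → False := by
    intro w g hg1 hg2 hor
    have key : ∀ i : ℕ, 1 ≤ i → i ≤ 2 →
        (w + ((g+t+i :ℕ):ZMod n) = 0 ∨ w + ((g+t+i :ℕ):ZMod n) = ((m:ℕ):ZMod n)) := by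
      intro i hi1 hi2
      have hnAd1 : ¬ (circulant n).Adj (w + ((g:ℕ):ZMod n)) (w + ((g+t+i :ℕ):ZMod n)) := by
        rw [adj_off c.ht4 w g (g+t+i) (by omega) (by omega)]; omega
      have hnAd0 : ¬ (circulant n).Adj w (w + ((g+t+i :ℕ):ZMod n)) := by
        rw [adj_off0 c.ht4 w (g+t+i) (by omega)]; omega
      rcases c.tri (w + ((g+t+i :ℕ):ZMod n)) with h | h | h | h
      · exfalso
        rcases hor with ⟨hXw, hYg⟩ | ⟨hYw, hXg⟩
        · exact hnAd1 ((circulant n).adj_comm _ _ |>.mp (hAll _ _ h hYg))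
        · exact hnAd0 ((circulant n).adj_comm _ _ |>.mp (hAll _ _ h hYw))
      · exfalso
        rcases hor with ⟨hXw, hYg⟩ | ⟨hYw, hXg⟩
        · exact hnAd0 (hAll _ _ hXw h)
        · exact hnAd1 (hAll _ _ hXg h)
      · exact Or.inl h
      · exact Or.inr h
    have k1 := key 1 (by omega) (by omega)
    have k2 := key 2 (by omega) (by omega)
    have hstep : w + ((g+t+2 :ℕ):ZMod n) = (w + ((g+t+1 :ℕ):ZMod n)) + ((1:ℕ):ZMod n) := by
      rw [← off_add]
    have hne12 : w + ((g+t+1 :ℕ):ZMod n) ≠ w + ((g+t+2 :ℕ):ZMod n) :=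
      ne_off w (g+t+1) (g+t+2) (by omega) (by omega) (by omega)
    rcases k1 with h1' | h1' <;> rcases k2 with h2' | h2'
    · exact hne12 (h1'.trans h2'.symm)
    · rw [h1', zero_add] at hstep
      rw [hstep] at h2'
      have := (cast_eq_cast 1 m (by omega) (by omega)).mp h2'
      omega
    · rw [h1'] at hstep
      have hc : ((m:ℕ):ZMod n) + ((1:ℕ):ZMod n) = ((m+1 :ℕ):ZMod n) := by push_cast; ring
      rw [hc] at hstep
      rw [hstep] at h2'
      have h2'' : ((m+1:ℕ):ZMod n) = ((0:ℕ):ZMod n) := by rw [Nat.cast_zero]; exact h2'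
      have := (cast_eq_cast (m+1) 0 (by omega) (by omega)).mp h2''
      omega
    · exact hne12 (h1'.trans h2'.symm)
  by_cases hbd : ∃ v : ZMod n, (v ≠ 0 ∧ v ≠ ((m:ℕ):ZMod n)) ∧
      (((v + ((1:ℕ):ZMod n) ≠ 0 ∧ v + ((1:ℕ):ZMod n) ≠ ((m:ℕ):ZMod n)) ∧
        ¬(c.X v ↔ c.X (v + ((1:ℕ):ZMod n)))) ∨
       ((v + ((1:ℕ):ZMod n) = 0 ∨ v + ((1:ℕ):ZMod n) = ((m:ℕ):ZMod n)) ∧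
        (v + ((2:ℕ):ZMod n) ≠ 0 ∧ v + ((2:ℕ):ZMod n) ≠ ((m:ℕ):ZMod n)) ∧
        ¬(c.X v ↔ c.X (v + ((2:ℕ):ZMod n)))))
  · obtain ⟨v, hv, hcase⟩ := hbd
    rcases hcase with ⟨hv1, hne⟩ | ⟨hR, hv2, hne⟩
    · rcases (c.cover v).mpr hv with hXv | hYv <;>
        rcases (c.cover _).mpr hv1 with hXv1 | hYv1
      · exact hne ⟨fun _ => hXv1, fun _ => hXv⟩
      · exact farz v 1 (by omega) (by omega) (Or.inl ⟨hXv, hYv1⟩)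
      · exact farz v 1 (by omega) (by omega) (Or.inr ⟨hYv, hXv1⟩)
      · exact hne ⟨fun h => (c.disj _ ⟨h, hYv⟩).elim, fun h => (c.disj _ ⟨h, hYv1⟩).elim⟩
    · rcases (c.cover v).mpr hv with hXv | hYv <;>
        rcases (c.cover _).mpr hv2 with hXv2 | hYv2
      · exact hne ⟨fun _ => hXv2, fun _ => hXv⟩
      · exact farz v 2 (by omega) (by omega) (Or.inl ⟨hXv, hYv2⟩)
      · exact farz v 2 (by omega) (by omega) (Or.inr ⟨hYv, hXv2⟩)
      · exact hne ⟨fun h => (c.disj _ ⟨h, hYv⟩).elim, fun h => (c.disj _ ⟨h, hYv2⟩).elim⟩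
  · have h1 : ∀ v : ZMod n, (v ≠ 0 ∧ v ≠ ((m:ℕ):ZMod n)) →
        (v + ((1:ℕ):ZMod n) ≠ 0 ∧ v + ((1:ℕ):ZMod n) ≠ ((m:ℕ):ZMod n)) →
        (c.X v ↔ c.X (v + ((1:ℕ):ZMod n))) := by
      intro v hv hv1
      by_contra hne
      exact hbd ⟨v, hv, Or.inl ⟨hv1, hne⟩⟩
    have h2 : ∀ v : ZMod n, (v ≠ 0 ∧ v ≠ ((m:ℕ):ZMod n)) →
        (v + ((1:ℕ):ZMod n) = 0 ∨ v + ((1:ℕ):ZMod n) = ((m:ℕ):ZMod n)) →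
        (v + ((2:ℕ):ZMod n) ≠ 0 ∧ v + ((2:ℕ):ZMod n) ≠ ((m:ℕ):ZMod n)) →
        (c.X v ↔ c.X (v + ((2:ℕ):ZMod n))) := by
      intro v hv hR hv2
      by_contra hne
      exact hbd ⟨v, hv, Or.inr ⟨hR, hv2, hne⟩⟩
    have Xconst := chain m hm2 (by omega) c.X h1 h2
    obtain ⟨x₁, x₂, hx₁, hx₂, hxne⟩ := c.x2
    obtain ⟨y₁, y₂, hy₁, hy₂, hyne⟩ := c.y2
    have hXy : c.X y₁ := (Xconst x₁ y₁ (c.inV_of_X hx₁) (c.inV_of_Y hy₁)).mp hx₁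
    exact c.disj y₁ ⟨hXy, hy₁⟩

end CDT

namespace CDT
variable {n : ℕ} [NeZero n]

lemma quad (c : Ctx n) (a b d e : ZMod n) (ha : c.X a) (hb : c.X b) (hd : c.Y d) (he : c.Y e)
    (hN : ¬ (((circulant n).Adj a d ↔ (circulant n).Adj a e) ↔
             ((circulant n).Adj b d ↔ (circulant n).Adj b e))) : False := by
  rw [c.star a d ha hd, c.star a e ha he, c.star b d hb hd, c.star b e hb he] at hN
  revert hN
  cases (c.s a) <;> cases (c.s b) <;> cases (c.s d) <;> cases (c.s e) <;> simp

set_option synthInstance.maxHeartbeats 1000000 in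
set_option synthInstance.maxSize 2048 in
/-- pigeonhole for n = 5 -/
lemma main5 (c : Ctx 5) (hm : c.m = 1) : False := by
  obtain ⟨x₁, x₂, hx₁, hx₂, hxne⟩ := c.x2
  obtain ⟨y₁, y₂, hy₁, hy₂, hyne⟩ := c.y2
  have v1 := c.inV_of_X hx₁
  have v2 := c.inV_of_X hx₂
  have v3 := c.inV_of_Y hy₁
  have v4 := c.inV_of_Y hy₂
  rw [hm] at v1 v2 v3 v4
  haveI : NeZero (5:ℕ) := ⟨by norm_num⟩
  have key : ∀ a b d e : ZMod 5, a ≠ 0 → a ≠ ((1:ℕ):ZMod 5) → b ≠ 0 → b ≠ ((1:ℕ):ZMod 5) →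
      d ≠ 0 → d ≠ ((1:ℕ):ZMod 5) → e ≠ 0 → e ≠ ((1:ℕ):ZMod 5) →
      a ≠ b → d ≠ e → a ≠ d → a ≠ e → b ≠ d → b ≠ e → False := by decide
  exact key x₁ x₂ y₁ y₂ v1.1 v1.2 v2.1 v2.2 v3.1 v3.2 v4.1 v4.2 hxne hyne
    (c.ne_of_XY hx₁ hy₁) (c.ne_of_XY hx₁ hy₂) (c.ne_of_XY hx₂ hy₁) (c.ne_of_XY hx₂ hy₂)

end CDT

namespace CDT

def enc7 : Fin 5 → ZMod 7 := ![1, 3, 4, 5, 6]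

def tbl7 : Fin 5 → Fin 5 → Bool := fun i j =>
  decide ((i.val + 1 = j.val ∨ j.val + 1 = i.val) ∧ i.val ≠ 0 ∧ j.val ≠ 0)

lemma adj7 (x y : ZMod 7) : (circulant 7).Adj x y ↔ ((y-x).val = 1 ∨ (y-x).val = 6) := by
  rw [adjv (show (1:ℕ) = 7/4 by norm_num) x y]
  have := ZMod.val_lt (y - x)
  omega

lemma tbl7_correct : ∀ i j : Fin 5, (circulant 7).Adj (enc7 i) (enc7 j) ↔ tbl7 i j = true := by
  have h : ∀ i j : Fin 5,
      (((enc7 j - enc7 i).val = 1 ∨ (enc7 j - enc7 i).val = 6)) ↔ tbl7 i j = true := by decide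
  intro i j
  rw [adj7]
  exact h i j

lemma K7 : ∀ χ : Fin 5 → Bool,
    (∃ i j : Fin 5, χ i = true ∧ χ j = true ∧ i ≠ j) →
    (∃ i j : Fin 5, χ i = false ∧ χ j = false ∧ i ≠ j) →
    ∃ a b d e : Fin 5, χ a = true ∧ χ b = true ∧ χ d = false ∧ χ e = false ∧
      ¬((tbl7 a d = true ↔ tbl7 a e = true) ↔ (tbl7 b d = true ↔ tbl7 b e = true)) := by
  decide

lemma main7 (c : Ctx 7) (hm : c.m = 2) : False := by
  have hχdef : ∀ i : Fin 5, (@decide (c.X (enc7 i)) (Classical.propDecidable _) = true) ↔ c.X (enc7 i) := by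
    intro i
    exact @decide_eq_true_iff _ (Classical.propDecidable _)
  set χ : Fin 5 → Bool := fun i => @decide (c.X (enc7 i)) (Classical.propDecidable _) with hχ
  have hχt : ∀ i, χ i = true ↔ c.X (enc7 i) := hχdef
  have hencV : ∀ i : Fin 5, enc7 i ≠ 0 ∧ enc7 i ≠ ((2:ℕ) : ZMod 7) := by decide
  have hY : ∀ i, χ i = false → c.Y (enc7 i) := by
    intro i hi
    have hV : enc7 i ≠ 0 ∧ enc7 i ≠ ((c.m:ℕ) : ZMod 7) := by rw [hm]; exact hencV i
    rcases (c.cover (enc7 i)).mpr hV with hX | hY'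
    · rw [← hχt] at hX
      rw [hi] at hX
      cases hX
    · exact hY'
  have hsurj : ∀ x : ZMod 7, x ≠ 0 → x ≠ ((2:ℕ):ZMod 7) → ∃ i, enc7 i = x := by decide
  obtain ⟨x₁, x₂, hx₁, hx₂, hxne⟩ := c.x2
  obtain ⟨y₁, y₂, hy₁, hy₂, hyne⟩ := c.y2
  have vx₁ := c.inV_of_X hx₁; have vx₂ := c.inV_of_X hx₂
  have vy₁ := c.inV_of_Y hy₁; have vy₂ := c.inV_of_Y hy₂
  rw [hm] at vx₁ vx₂ vy₁ vy₂
  obtain ⟨i₁, hi₁⟩ := hsurj x₁ vx₁.1 vx₁.2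
  obtain ⟨i₂, hi₂⟩ := hsurj x₂ vx₂.1 vx₂.2
  obtain ⟨j₁, hj₁⟩ := hsurj y₁ vy₁.1 vy₁.2
  obtain ⟨j₂, hj₂⟩ := hsurj y₂ vy₂.1 vy₂.2
  have hχi₁ : χ i₁ = true := (hχt i₁).mpr (hi₁ ▸ hx₁)
  have hχi₂ : χ i₂ = true := (hχt i₂).mpr (hi₂ ▸ hx₂)
  have hχj₁ : χ j₁ = false := by
    rcases Bool.eq_false_or_eq_true (χ j₁) with h | h
    · exact absurd ((hχt j₁).mp h) (fun hX => c.disj _ ⟨hX, hj₁ ▸ hy₁⟩)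
    · exact h
  have hχj₂ : χ j₂ = false := by
    rcases Bool.eq_false_or_eq_true (χ j₂) with h | h
    · exact absurd ((hχt j₂).mp h) (fun hX => c.disj _ ⟨hX, hj₂ ▸ hy₂⟩)
    · exact h
  have hine : i₁ ≠ i₂ := fun h => hxne (by rw [← hi₁, h, hi₂])
  have hjne : j₁ ≠ j₂ := fun h => hyne (by rw [← hj₁, h, hj₂])
  obtain ⟨a, b, d, e, ha, hb, hd, he, hN⟩ :=
    K7 χ ⟨i₁, i₂, hχi₁, hχi₂, hine⟩ ⟨j₁, j₂, hχj₁, hχj₂, hjne⟩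
  rw [← tbl7_correct a d, ← tbl7_correct a e, ← tbl7_correct b d, ← tbl7_correct b e] at hN
  exact quad c (enc7 a) (enc7 b) (enc7 d) (enc7 e)
    ((hχt a).mp ha) ((hχt b).mp hb) (hY d hd) (hY e he) hN

end CDT

namespace CDT
variable {n : ℕ} [NeZero n]

lemma finish (c : Ctx n) : False := by
  have hn := c.hn; have htm := c.htm; have hmt := c.hmt; have ht1 := c.ht1
  rcases Nat.lt_or_ge c.t 2 with h | h
  · have h57 : n = 5 ∨ n = 7 := by omega
    rcases h57 with h' | h'
    · subst h'
      exact main5 c (by omega)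
    · subst h'
      exact main7 c (by omega)
  · exact main c h

end CDT

theorem circulant_delete_two_not_separable (n : ℕ) (hodd : Odd n) (h5 : 5 ≤ n) :
    ¬ ((circulant n).induce
        {w : ZMod n | w ≠ 0 ∧ w ≠ (((n + 1) / 4 : ℕ) : ZMod n)}).SwitchingSeparable := by
  intro hsep
  haveI : NeZero n := ⟨by omega⟩
  have hodd' : n % 2 = 1 := Nat.odd_iff.mp hodd
  set S : Set (ZMod n) := {w : ZMod n | w ≠ 0 ∧ w ≠ (((n + 1) / 4 : ℕ) : ZMod n)} with hSdef
  obtain ⟨W, hW2, hWc2, U, hU⟩ := hsep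
  have hmemS : ∀ x : ZMod n, x ∈ S ↔ (x ≠ 0 ∧ x ≠ (((n + 1) / 4 : ℕ) : ZMod n)) := by
    intro x; rw [hSdef]; rfl
  have bne : ∀ x y : Bool, (x ≠ y) ↔ ¬((x = true) ↔ (y = true)) := by decide
  have c : Ctx n := {
    t := n / 4
    m := (n + 1) / 4
    X := fun x => ∃ h : x ∈ S, (⟨x, h⟩ : ↥S) ∈ W
    Y := fun x => ∃ h : x ∈ S, (⟨x, h⟩ : ↥S) ∈ Wᶜ
    s := fun x => @decide (∃ h : x ∈ S, (⟨x, h⟩ : ↥S) ∈ U) (Classical.propDecidable _)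
    hn := by omega
    htm := by omega
    hmt := by omega
    ht1 := by omega
    ht4 := rfl
    disj := by
      rintro x ⟨⟨h1, hw⟩, ⟨h2, hw'⟩⟩
      exact hw' hw
    cover := by
      intro x
      constructor
      · rintro (⟨h, _⟩ | ⟨h, _⟩) <;> exact (hmemS x).mp h
      · intro h
        have hx : x ∈ S := (hmemS x).mpr h
        rcases Classical.em ((⟨x, hx⟩ : ↥S) ∈ W) with hw | hw
        · exact Or.inl ⟨hx, hw⟩
        · exact Or.inr ⟨hx, hw⟩
    star := by
      rintro a b ⟨ha, hwa⟩ ⟨hb, hwb⟩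
      have hne : (⟨a, ha⟩ : ↥S) ≠ ⟨b, hb⟩ := by
        intro h
        have hab : a = b := congrArg Subtype.val h
        subst hab
        exact hwb hwa
      have hU' := hU ⟨a, ha⟩ hwa ⟨b, hb⟩ hwb
      have hU'' : ¬ ((⟨a, ha⟩ : ↥S) ≠ (⟨b, hb⟩ : ↥S) ∧
          ((circulant n).Adj a b ↔ ((⟨a, ha⟩ : ↥S) ∈ U ↔ (⟨b, hb⟩ : ↥S) ∈ U))) := hU'
      have hkey : (circulant n).Adj a b ↔ ¬((⟨a, ha⟩ : ↥S) ∈ U ↔ (⟨b, hb⟩ : ↥S) ∈ U) := by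
        tauto
      have hsa : ((fun x => @decide (∃ h : x ∈ S, (⟨x, h⟩ : ↥S) ∈ U) (Classical.propDecidable _)) a = true)
          ↔ ((⟨a, ha⟩ : ↥S) ∈ U) := by
        rw [@decide_eq_true_iff _ (Classical.propDecidable _)]
        exact ⟨fun ⟨_, hu⟩ => hu, fun hu => ⟨ha, hu⟩⟩
      have hsb : ((fun x => @decide (∃ h : x ∈ S, (⟨x, h⟩ : ↥S) ∈ U) (Classical.propDecidable _)) b = true)
          ↔ ((⟨b, hb⟩ : ↥S) ∈ U) := by
        rw [@decide_eq_true_iff _ (Classical.propDecidable _)]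
        exact ⟨fun ⟨_, hu⟩ => hu, fun hu => ⟨hb, hu⟩⟩
      rw [bne, hsa, hsb]
      exact hkey
    x2 := by
      obtain ⟨a, b, ha, hb, hab⟩ := (Set.one_lt_ncard_iff (Set.toFinite W)).mp (by omega)
      exact ⟨a.1, b.1, ⟨a.2, ha⟩, ⟨b.2, hb⟩, fun h => hab (Subtype.coe_injective h)⟩
    y2 := by
      obtain ⟨a, b, ha, hb, hab⟩ := (Set.one_lt_ncard_iff (Set.toFinite Wᶜ)).mp (by omega)
      exact ⟨a.1, b.1, ⟨a.2, ha⟩, ⟨b.2, hb⟩, fun h => hab (Subtype.coe_injective h)⟩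
  }
  exact CDT.finish c
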